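/- Let V be a finite set, d : V → ℕ, let u, v, w ∈ V be pairwise distinct with S = {u, v, w}, let x ∉ V, and let F be a set of unordered pairs of distinct elements of V containing no pair with both elements in S. Then there exists a simple graph G on V with deg_G(y) = d(y) for all y ∈ V, with no edge of G in F, and with exactly one edge of G having both endpoints in S, if and only if there exists a simple graph G' on V ∪ {x} with deg_{G'}(y) = d(y) for all y ∈ V, deg_{G'}(x) = 2, every neighbor of x in G' belonging to S, no edge of G' having both endpoints in S, and no edge of G' in F. -/

import Mathlib

open Finset

set_option linter.unusedSectionVars false

private lemma deg_sum' {V : Type*} [Fintype V] [DecidableEq V] (G : SimpleGraph V)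
    [DecidableRel G.Adj] (y : V) :
    G.degree y = ∑ q, if G.Adj y q then 1 else 0 := by
  rw [← SimpleGraph.card_neighborFinset_eq_degree, SimpleGraph.neighborFinset_eq_filter,
    Finset.card_filter]

section Aux
variable {V : Type*} [Fintype V] [DecidableEq V]

/-- forward construction: delete the edge `ab` and attach the new vertex to `a` and `b`. -/
private def addG (G : SimpleGraph V) (a b : V) : SimpleGraph (Option V) where
  Adj z z' := match z, z' with
    | some p, some q => G.Adj p q ∧ ¬(s(p,q) = s(a,b))
    | some p, none => p = a ∨ p = b
    | none, some q => q = a ∨ q = b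
    | none, none => False
  symm := by
    constructor
    intro z z' h
    cases z <;> cases z' <;> simp_all [G.adj_comm] <;> tauto
  loopless := by
    constructor
    intro z; cases z <;> simp [G.loopless]

private instance addG_dec (G : SimpleGraph V) [DecidableRel G.Adj] (a b : V) :
    DecidableRel (addG G a b).Adj :=
  fun z z' => by cases z <;> cases z' <;> exact (by unfold addG; dsimp; infer_instance)

@[simp] private lemma addG_adj_ss (G : SimpleGraph V) (a b p q : V) :
    (addG G a b).Adj (some p) (some q) ↔ G.Adj p q ∧ ¬(s(p,q) = s(a,b)) := Iff.rfl
@[simp] private lemma addG_adj_sn (G : SimpleGraph V) (a b p : V) :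
    (addG G a b).Adj (some p) none ↔ (p = a ∨ p = b) := Iff.rfl
@[simp] private lemma addG_adj_ns (G : SimpleGraph V) (a b q : V) :
    (addG G a b).Adj none (some q) ↔ (q = a ∨ q = b) := Iff.rfl
@[simp] private lemma addG_adj_nn (G : SimpleGraph V) (a b : V) :
    ¬ (addG G a b).Adj none none := fun h => h

private lemma addG_deg_none (G : SimpleGraph V) [DecidableRel G.Adj] (a b : V) (hab : a ≠ b) :
    (addG G a b).degree none = 2 := by
  rw [deg_sum', Fintype.sum_option]
  simp only [addG_adj_nn, if_false, addG_adj_ns, zero_add]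
  rw [← Finset.card_filter]
  have : (Finset.univ.filter fun q => q = a ∨ q = b) = {a, b} := by ext q; simp
  rw [this, Finset.card_insert_of_notMem (by simp [hab]), Finset.card_singleton]

private lemma key_sum (G : SimpleGraph V) [DecidableRel G.Adj] (c c' : V) (hGcc : G.Adj c c') :
    (1 : ℕ) + ∑ q, (if G.Adj c q ∧ q ≠ c' then 1 else 0) = ∑ q, if G.Adj c q then 1 else 0 := by
  rw [← Finset.add_sum_erase (a := c') _ _ (Finset.mem_univ c'),
      ← Finset.add_sum_erase (a := c') _ _ (Finset.mem_univ c')]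
  have h1 : (if G.Adj c c' ∧ c' ≠ c' then (1:ℕ) else 0) = 0 := by simp
  have h2 : (if G.Adj c c' then (1:ℕ) else 0) = 1 := by simp [hGcc]
  rw [h1, h2, zero_add]
  congr 1
  apply Finset.sum_congr rfl
  intro q hq
  have hq' : q ≠ c' := (Finset.mem_erase.mp hq).1
  simp [hq']

private lemma addG_deg_some (G : SimpleGraph V) [DecidableRel G.Adj] (a b : V) (hab : a ≠ b)
    (hGab : G.Adj a b) (y : V) : (addG G a b).degree (some y) = G.degree y := by
  rw [deg_sum', Fintype.sum_option, deg_sum']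
  by_cases hy1 : y = a
  · subst hy1
    simp only [addG_adj_sn, true_or, if_true, addG_adj_ss]
    have hc : ∀ q : V, (G.Adj y q ∧ ¬(s(y,q) = s(y,b))) ↔ (G.Adj y q ∧ q ≠ b) := by
      intro q; rw [Sym2.congr_right]
    simp only [hc]
    exact key_sum G y b hGab
  · by_cases hy2 : y = b
    · subst hy2
      simp only [addG_adj_sn, or_true, if_true, addG_adj_ss]
      have hc : ∀ q : V, (G.Adj y q ∧ ¬(s(y,q) = s(a,y))) ↔ (G.Adj y q ∧ q ≠ a) := by
        intro q
        rw [Sym2.eq_swap (a := a) (b := y), Sym2.congr_right]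
      simp only [hc]
      exact key_sum G y a (G.adj_symm hGab)
    · simp only [addG_adj_sn, hy1, hy2, or_self, if_false, zero_add, addG_adj_ss]
      apply Finset.sum_congr rfl
      intro q _
      have hc : ¬ (s(y,q) = s(a,b)) := by
        rw [Sym2.eq_iff]
        rintro (⟨rfl, rfl⟩ | ⟨rfl, rfl⟩) <;> simp_all
      simp [hc]

/-- backward construction: delete the new vertex and add the edge `ab`. -/
private def remG (G' : SimpleGraph (Option V)) (a b : V) (hab : a ≠ b) : SimpleGraph V where
  Adj p q := G'.Adj (some p) (some q) ∨ s(p,q) = s(a,b)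
  symm := by
    constructor
    intro p q h
    rcases h with h | h
    · exact Or.inl (G'.adj_symm h)
    · exact Or.inr (by rwa [Sym2.eq_swap])
  loopless := by
    constructor
    intro p h
    rcases h with h | h
    · exact G'.irrefl h
    · rw [Sym2.eq_iff] at h
      rcases h with ⟨rfl, rfl⟩ | ⟨rfl, rfl⟩ <;> exact hab rfl

private instance remG_dec (G' : SimpleGraph (Option V)) [DecidableRel G'.Adj] (a b : V)
    (hab : a ≠ b) :
    DecidableRel (remG G' a b hab).Adj := fun p q => by unfold remG; dsimp; infer_instance

@[simp] private lemma remG_adj (G' : SimpleGraph (Option V)) (a b : V) (hab : a ≠ b) (p q : V) :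
    (remG G' a b hab).Adj p q ↔ G'.Adj (some p) (some q) ∨ s(p,q) = s(a,b) := Iff.rfl

private lemma key_sum2 (P : V → Prop) [DecidablePred P] (b : V) (hPb : ¬ P b) :
    ∑ q, (if P q ∨ q = b then 1 else 0) = 1 + ∑ q, (if P q then (1:ℕ) else 0) := by
  rw [← Finset.add_sum_erase (a := b) _ _ (Finset.mem_univ b),
      ← Finset.add_sum_erase (a := b) _ (fun q => if P q then (1:ℕ) else 0) (Finset.mem_univ b)]
  have h1 : (if P b ∨ b = b then (1:ℕ) else 0) = 1 := by simp
  have h2 : (if P b then (1:ℕ) else 0) = 0 := by simp [hPb]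
  rw [h1, h2, zero_add]
  congr 1
  apply Finset.sum_congr rfl
  intro q hq
  have hq' : q ≠ b := (Finset.mem_erase.mp hq).1
  simp [hq']

private lemma remG_deg (G' : SimpleGraph (Option V)) [DecidableRel G'.Adj] (a b : V) (hab : a ≠ b)
    (hnadj : ¬ G'.Adj (some a) (some b))
    (hnone : ∀ z, G'.Adj none z ↔ (z = some a ∨ z = some b)) (y : V) :
    (remG G' a b hab).degree y = G'.degree (some y) := by
  rw [deg_sum', deg_sum' G', Fintype.sum_option]
  have hyn : G'.Adj (some y) none ↔ (y = a ∨ y = b) := by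
    rw [G'.adj_comm, hnone]
    simp
  by_cases hy1 : y = a
  · subst hy1
    simp only [remG_adj, hyn, true_or, if_true]
    have hc : ∀ q : V, (G'.Adj (some y) (some q) ∨ s(y,q) = s(y,b)) ↔
        (G'.Adj (some y) (some q) ∨ q = b) := by intro q; rw [Sym2.congr_right]
    simp only [hc]
    exact key_sum2 _ b hnadj
  · by_cases hy2 : y = b
    · subst hy2
      simp only [remG_adj, hyn, or_true, if_true]
      have hc : ∀ q : V, (G'.Adj (some y) (some q) ∨ s(y,q) = s(a,y)) ↔
          (G'.Adj (some y) (some q) ∨ q = a) := by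
        intro q; rw [Sym2.eq_swap (a := a) (b := y), Sym2.congr_right]
      simp only [hc]
      exact key_sum2 _ a (fun h => hnadj (G'.adj_symm h))
    · simp only [remG_adj, hyn, hy1, hy2, or_self, if_false, zero_add]
      apply Finset.sum_congr rfl
      intro q _
      have hc : ¬ (s(y,q) = s(a,b)) := by
        rw [Sym2.eq_iff]
        rintro (⟨rfl, rfl⟩ | ⟨rfl, rfl⟩) <;> simp_all
      simp [hc]

end Aux

/-- The gadget replacing the cut constraint `(S, d(S) - 2)` for `S = {u, v, w}` of size 3.
There is a simple graph `G` on `V` realizing `d`, avoiding all forbidden pairs of `F`, and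
having exactly one edge with both endpoints in `S`, if and only if there is a simple graph
`G'` on `V ∪ {x}` (modeled as `Option V`, the new vertex `x` being `none`) realizing `d`
on `V`, where `x` has degree `2`, all neighbors of `x` lie in `S`, no edge of `G'` has
both endpoints in `S`, and `G'` avoids all forbidden pairs of `F`. -/
theorem size_three_cut_gadget_one_edge {V : Type*} [Fintype V] [DecidableEq V]
    (d : V → ℕ) (u v w : V) (huv : u ≠ v) (huw : u ≠ w) (hvw : v ≠ w)
    (F : Set (Sym2 V)) (hFdiag : ∀ e ∈ F, ¬ e.IsDiag)
    (hFS : ∀ a b : V, s(a, b) ∈ F → a ∉ ({u, v, w} : Set V) ∨ b ∉ ({u, v, w} : Set V)) :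
    (∃ (G : SimpleGraph V) (_ : DecidableRel G.Adj),
        (∀ y, G.degree y = d y) ∧ (∀ e ∈ F, e ∉ G.edgeSet) ∧
          (if G.Adj u v then 1 else 0) + (if G.Adj u w then 1 else 0) +
            (if G.Adj v w then 1 else 0) = 1) ↔
      (∃ (G' : SimpleGraph (Option V)) (_ : DecidableRel G'.Adj),
        (∀ y : V, G'.degree (some y) = d y) ∧ G'.degree none = 2 ∧
          (∀ z, G'.Adj none z → z = some u ∨ z = some v ∨ z = some w) ∧
          ¬ G'.Adj (some u) (some v) ∧ ¬ G'.Adj (some u) (some w) ∧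
            ¬ G'.Adj (some v) (some w) ∧
          (∀ a b : V, s(a, b) ∈ F → ¬ G'.Adj (some a) (some b))) := by
  constructor
  · rintro ⟨G, instG, hdeg, hF, hsum⟩
    -- helper producing the gadget graph once the unique `S`-edge `ab` is identified
    have build : ∀ a b : V, a ≠ b →
        (a = u ∨ a = v ∨ a = w) → (b = u ∨ b = v ∨ b = w) → G.Adj a b →
        (¬ G.Adj u v ∨ s(u,v) = s(a,b)) → (¬ G.Adj u w ∨ s(u,w) = s(a,b)) →
        (¬ G.Adj v w ∨ s(v,w) = s(a,b)) →
        (∃ (G' : SimpleGraph (Option V)) (_ : DecidableRel G'.Adj),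
          (∀ y : V, G'.degree (some y) = d y) ∧ G'.degree none = 2 ∧
            (∀ z, G'.Adj none z → z = some u ∨ z = some v ∨ z = some w) ∧
            ¬ G'.Adj (some u) (some v) ∧ ¬ G'.Adj (some u) (some w) ∧
              ¬ G'.Adj (some v) (some w) ∧
            (∀ a b : V, s(a, b) ∈ F → ¬ G'.Adj (some a) (some b))) := by
      intro a b hab haS hbS hGab h1 h2 h3
      refine ⟨addG G a b, addG_dec G a b, ?_, addG_deg_none G a b hab, ?_, ?_, ?_, ?_, ?_⟩
      · intro y; rw [addG_deg_some G a b hab hGab y, hdeg y]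
      · rintro (_ | z) hz
        · exact absurd hz (addG_adj_nn G a b)
        · rcases (addG_adj_ns G a b z).mp hz with rfl | rfl
          · rcases haS with rfl | rfl | rfl
            · exact Or.inl rfl
            · exact Or.inr (Or.inl rfl)
            · exact Or.inr (Or.inr rfl)
          · rcases hbS with rfl | rfl | rfl
            · exact Or.inl rfl
            · exact Or.inr (Or.inl rfl)
            · exact Or.inr (Or.inr rfl)
      · rintro ⟨hadj, hne⟩; rcases h1 with h | h
        · exact h hadj
        · exact hne h
      · rintro ⟨hadj, hne⟩; rcases h2 with h | h
        · exact h hadj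
        · exact hne h
      · rintro ⟨hadj, hne⟩; rcases h3 with h | h
        · exact h hadj
        · exact hne h
      · intro p q hpq hadj
        exact hF s(p,q) hpq hadj.1
    by_cases e1 : G.Adj u v <;> by_cases e2 : G.Adj u w <;> by_cases e3 : G.Adj v w <;>
      simp only [e1, e2, e3, if_true, if_false] at hsum
    · omega
    · omega
    · omega
    · exact build u v huv (Or.inl rfl) (Or.inr (Or.inl rfl)) e1
        (Or.inr rfl) (Or.inl e2) (Or.inl e3)
    · omega
    · exact build u w huw (Or.inl rfl) (Or.inr (Or.inr rfl)) e2
        (Or.inl e1) (Or.inr rfl) (Or.inl e3)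
    · exact build v w hvw (Or.inr (Or.inl rfl)) (Or.inr (Or.inr rfl)) e3
        (Or.inl e1) (Or.inl e2) (Or.inr rfl)
    · omega
  · rintro ⟨G', instG', hdeg, hdegn, hnbr, hSuv, hSuw, hSvw, hFadj⟩
    -- the two neighbours of `none`
    have hcard : (G'.neighborFinset none).card = 2 := hdegn
    obtain ⟨x₁, x₂, hx12, hset⟩ := Finset.card_eq_two.mp hcard
    have hx₁ : G'.Adj none x₁ := by
      rw [← SimpleGraph.mem_neighborFinset, hset]; simp
    have hx₂ : G'.Adj none x₂ := by
      rw [← SimpleGraph.mem_neighborFinset, hset]; simp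
    obtain ⟨a, rfl⟩ : ∃ a : V, x₁ = some a := by
      rcases hnbr x₁ hx₁ with rfl | rfl | rfl <;> exact ⟨_, rfl⟩
    obtain ⟨b, rfl⟩ : ∃ b : V, x₂ = some b := by
      rcases hnbr x₂ hx₂ with rfl | rfl | rfl <;> exact ⟨_, rfl⟩
    have hab : a ≠ b := fun h => hx12 (by rw [h])
    have hnone : ∀ z, G'.Adj none z ↔ (z = some a ∨ z = some b) := by
      intro z
      rw [← SimpleGraph.mem_neighborFinset, hset]
      simp
    have haS : a = u ∨ a = v ∨ a = w := by
      rcases hnbr _ hx₁ with h | h | h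
      · exact Or.inl (Option.some_injective _ h)
      · exact Or.inr (Or.inl (Option.some_injective _ h))
      · exact Or.inr (Or.inr (Option.some_injective _ h))
    have hbS : b = u ∨ b = v ∨ b = w := by
      rcases hnbr _ hx₂ with h | h | h
      · exact Or.inl (Option.some_injective _ h)
      · exact Or.inr (Or.inl (Option.some_injective _ h))
      · exact Or.inr (Or.inr (Option.some_injective _ h))
    have hnadj : ¬ G'.Adj (some a) (some b) := by
      rcases haS with rfl | rfl | rfl <;> rcases hbS with rfl | rfl | rfl <;>
        first
          | exact absurd rfl hab
          | assumption
          | exact fun h => hSuv (G'.adj_symm h)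
          | exact fun h => hSuw (G'.adj_symm h)
          | exact fun h => hSvw (G'.adj_symm h)
    refine ⟨remG G' a b hab, remG_dec G' a b hab, ?_, ?_, ?_⟩
    · intro y; rw [remG_deg G' a b hab hnadj hnone y, hdeg y]
    · intro e heF
      induction e using Sym2.ind with
      | _ p q =>
        rw [SimpleGraph.mem_edgeSet, remG_adj]
        rintro (h | h)
        · exact hFadj p q heF h
        · rw [h] at heF
          rcases hFS a b heF with h' | h'
          · rcases haS with rfl | rfl | rfl <;> simp at h'
          · rcases hbS with rfl | rfl | rfl <;> simp at h'
    · have adj_iff : ∀ p q : V, ¬ G'.Adj (some p) (some q) →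
          ((remG G' a b hab).Adj p q ↔ s(p,q) = s(a,b)) := by
        intro p q h
        rw [remG_adj]
        exact or_iff_right h
      rw [if_congr (adj_iff u v hSuv) rfl rfl, if_congr (adj_iff u w hSuw) rfl rfl,
        if_congr (adj_iff v w hSvw) rfl rfl]
      rcases haS with rfl | rfl | rfl <;> rcases hbS with rfl | rfl | rfl <;>
        first
          | exact absurd rfl hab
          | simp [Sym2.eq_iff, huv, huw, hvw, Ne.symm huv, Ne.symm huw, Ne.symm hvw]
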